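/- Assume k_v + Γ > 0, let 0 < r_l < v_ref, λ ≥ λ_min(r_l), let P_l be a symmetric positive definite 2×2 real matrix and τ > 0 be such that Φ ≺ 0 and the 3×3 matrix [[P_l, Cᵀ], [C, r_l²]] is positive semidefinite. Then every solution (ε₁, ε₂, f) of the error system whose initial condition satisfies ε(0)ᵀP_lε(0) ≤ 1 remains in the set {ε : εᵀP_lε ≤ 1} for all t ≥ 0 and converges to the origin: (ε₁(t), ε₂(t)) → (0, 0) as t → ∞ (regional asymptotic stability with basin estimate 𝒟 = {ε : εᵀP_lε ≤ 1}). -/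

import Mathlib

open Matrix Real

/-- The friction nonlinearity `F_nl`. -/
noncomputable def Fnl (m g vs muC muS : ℝ) (v : ℝ) : ℝ :=
  m * g * (muC + (muS - muC) * Real.exp (-(v ^ 2) / vs ^ 2)) * Real.sign v

/-- The set-valued extension `𝔉` of the friction nonlinearity. -/
noncomputable def Ffric (m g vs muC muS : ℝ) (v : ℝ) : Set ℝ :=
  if v = 0 then Set.Icc (-(muS * m * g)) (muS * m * g) else {Fnl m g vs muC muS v}

/-- The shifted nonlinearity `φ(s) = F_nl(s + v_ref) − F_nl(v_ref)`. -/
noncomputable def phi (m g vs muC muS vref : ℝ) (s : ℝ) : ℝ :=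
  Fnl m g vs muC muS (s + vref) - Fnl m g vs muC muS vref

/-- `Γ = −2·m·g·(μ_S − μ_C)·(v_ref/v_s²)·exp(−v_ref²/v_s²)`. -/
noncomputable def Gam (m g vs muC muS vref : ℝ) : ℝ :=
  -2 * m * g * (muS - muC) * (vref / vs ^ 2) * Real.exp (-(vref ^ 2) / vs ^ 2)

/-- `λ_min(r) = sup{−φ(s)/s : s ∈ [−r, r], s ≠ 0}`. -/
noncomputable def lammin (m g vs muC muS vref : ℝ) (r : ℝ) : ℝ :=
  sSup {y : ℝ | ∃ s ∈ Set.Icc (-r) r, s ≠ 0 ∧ y = -phi m g vs muC muS vref s / s}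

/-- `M ≺ 0`: the quadratic form of `M` is negative definite. -/
def NegDef {n : Type*} [Fintype n] (M : Matrix n n ℝ) : Prop :=
  ∀ x : n → ℝ, x ≠ 0 → x ⬝ᵥ M.mulVec x < 0

/-- The dynamics matrix `A`. -/
noncomputable def Amat (m k kv : ℝ) : Matrix (Fin 2) (Fin 2) ℝ := !![-kv / m, -k / m; 1, 0]

/-- The linearized dynamics matrix `A₀`. -/
noncomputable def A0mat (m k kv Γ : ℝ) : Matrix (Fin 2) (Fin 2) ℝ :=
  !![-(kv + Γ) / m, -k / m; 1, 0]

/-- The input vector `B = (−1/m, 0)ᵀ`, as an element of `ℝ²`. -/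
noncomputable def Bvec (m : ℝ) : Fin 2 → ℝ := ![-1 / m, 0]

/-- The input matrix `B = (−1/m, 0)ᵀ`, as a `2×1` matrix. -/
noncomputable def Bmat (m : ℝ) : Matrix (Fin 2) (Fin 1) ℝ := !![-1 / m; 0]

/-- The row matrix `C = (1, 0)`. -/
def Cmat : Matrix (Fin 1) (Fin 2) ℝ := !![1, 0]

/-- The 3×3 matrix `Φ` of the regional stability LMI. -/
noncomputable def PhiMat (m k kv Γ lam τ : ℝ) (Pl : Matrix (Fin 2) (Fin 2) ℝ) :
    Matrix (Fin 2 ⊕ Fin 1) (Fin 2 ⊕ Fin 1) ℝ :=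
  Matrix.fromBlocks
    ((A0mat m k kv Γ)ᵀ * Pl + Pl * A0mat m k kv Γ - (2 * τ * Γ * (Γ + lam)) • (Cmatᵀ * Cmat))
    (Pl * Bmat m - (τ * (2 * Γ + lam)) • Cmatᵀ)
    ((Bmat m)ᵀ * Pl - (τ * (2 * Γ + lam)) • Cmat)
    !![-2 * τ]

-- ============ auxiliary lemmas ============

lemma negdef_bound {n : Type*} [Fintype n] [DecidableEq n] [Nonempty n]
    (M : Matrix n n ℝ) (h : NegDef M) :
    ∃ δ : ℝ, 0 < δ ∧ ∀ x : n → ℝ, x ⬝ᵥ M.mulVec x ≤ -δ * (x ⬝ᵥ x) := by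
  have hcont : Continuous fun x : n → ℝ => x ⬝ᵥ M.mulVec x := by
    have : (fun x : n → ℝ => x ⬝ᵥ M.mulVec x)
        = fun x => ∑ i, x i * ∑ j, M i j * x j := by
      funext x; rfl
    rw [this]
    exact continuous_finset_sum _ fun i _ =>
      (continuous_apply i).mul (continuous_finset_sum _ fun j _ =>
        (continuous_const.mul (continuous_apply j)))
  have hsc : IsCompact (Metric.sphere (0 : n → ℝ) 1) := isCompact_sphere _ _
  have hne : (Metric.sphere (0 : n → ℝ) 1).Nonempty := by
    obtain ⟨x, hx⟩ := exists_norm_eq (n → ℝ) (c := 1) zero_le_one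
    exact ⟨x, by simpa using hx⟩
  obtain ⟨u, hu, hmax⟩ := hsc.exists_isMaxOn hne hcont.continuousOn
  have hunorm : ‖u‖ = 1 := by simpa using hu
  have huneq : u ≠ 0 := by intro h0; rw [h0] at hunorm; simp at hunorm
  set c := u ⬝ᵥ M.mulVec u with hc
  have hcneg : c < 0 := h u huneq
  set N := (Fintype.card n : ℝ) with hN
  have hNpos : 0 < N := by
    have h0 : 0 < Fintype.card n := Fintype.card_pos
    rw [hN]; exact_mod_cast h0
  refine ⟨-c / N, div_pos (neg_pos.2 hcneg) hNpos, fun x => ?_⟩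
  rcases eq_or_ne x 0 with rfl | hx0
  · simp
  · have hxn : 0 < ‖x‖ := norm_pos_iff.2 hx0
    set v := ‖x‖⁻¹ • x with hv
    have hvn : v ∈ Metric.sphere (0 : n → ℝ) 1 := by
      simp [hv, norm_smul, abs_of_pos (inv_pos.2 hxn), inv_mul_cancel₀ hxn.ne']
    have hvq : v ⬝ᵥ M.mulVec v ≤ c := hmax hvn
    have hvv : v ⬝ᵥ M.mulVec v = ‖x‖⁻¹ * (‖x‖⁻¹ * (x ⬝ᵥ M.mulVec x)) := by
      rw [hv, smul_dotProduct, Matrix.mulVec_smul, dotProduct_smul]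
      simp [smul_eq_mul]
    have hq : x ⬝ᵥ M.mulVec x ≤ c * ‖x‖ ^ 2 := by
      rw [hvv] at hvq
      have h2 : ‖x‖⁻¹ * (‖x‖⁻¹ * (x ⬝ᵥ M.mulVec x)) * ‖x‖^2 ≤ c * ‖x‖^2 :=
        mul_le_mul_of_nonneg_right hvq (by positivity)
      have hinv : ‖x‖⁻¹ * ‖x‖ = 1 := inv_mul_cancel₀ hxn.ne'
      have h3 : ‖x‖⁻¹ * (‖x‖⁻¹ * (x ⬝ᵥ M.mulVec x)) * ‖x‖^2 = x ⬝ᵥ M.mulVec x := by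
        calc ‖x‖⁻¹ * (‖x‖⁻¹ * (x ⬝ᵥ M.mulVec x)) * ‖x‖^2
            = (‖x‖⁻¹ * ‖x‖) * ((‖x‖⁻¹ * ‖x‖) * (x ⬝ᵥ M.mulVec x)) := by ring
          _ = x ⬝ᵥ M.mulVec x := by rw [hinv]; ring
      linarith [h3 ▸ h2]
    have hdot : x ⬝ᵥ x ≤ N * ‖x‖ ^ 2 := by
      have hterm : ∀ i : n, x i * x i ≤ ‖x‖ ^ 2 := fun i => by
        have h1 : |x i| ≤ ‖x‖ := by simpa using norm_le_pi_norm x i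
        nlinarith [abs_nonneg (x i), sq_abs (x i)]
      calc x ⬝ᵥ x = ∑ i, x i * x i := rfl
        _ ≤ ∑ _i : n, ‖x‖ ^ 2 := Finset.sum_le_sum fun i _ => hterm i
        _ = N * ‖x‖ ^ 2 := by simp [hN, mul_comm]
    have hfin : c * ‖x‖ ^ 2 ≤ -(-c / N) * (x ⬝ᵥ x) := by
      have hcN : c / N * (x ⬝ᵥ x) ≥ c / N * (N * ‖x‖^2) :=
        mul_le_mul_of_nonpos_left hdot (le_of_lt (div_neg_of_neg_of_pos hcneg hNpos))
      have heq : c / N * (N * ‖x‖^2) = c * ‖x‖^2 := by field_simp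
      have heq2 : -(-c / N) * (x ⬝ᵥ x) = c / N * (x ⬝ᵥ x) := by ring
      linarith [heq ▸ hcN, heq2]
    linarith [hq, hfin]

lemma fnl_eq_pos (m g vs muC muS : ℝ) {v : ℝ} (hv : 0 < v) :
    Fnl m g vs muC muS v = m * g * (muC + (muS - muC) * Real.exp (-(v ^ 2) / vs ^ 2)) := by
  unfold Fnl; rw [Real.sign_of_pos hv]; ring

lemma fnl_hasDerivAt (m g vs muC muS : ℝ) {v : ℝ} (hv : 0 < v) :
    HasDerivAt (Fnl m g vs muC muS)
      (m * g * (muS - muC) * (-(2 * v) / vs ^ 2 * Real.exp (-(v ^ 2) / vs ^ 2))) v := by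
  have h0 : (fun x : ℝ => -(x ^ 2) / vs ^ 2) = fun x => (-1 / vs ^ 2) * x ^ 2 := by
    funext x; ring
  have h1 : HasDerivAt (fun x : ℝ => -(x ^ 2) / vs ^ 2) (-(2 * v) / vs ^ 2) v := by
    rw [h0]
    have := (hasDerivAt_pow 2 v).const_mul (-1 / vs ^ 2)
    refine this.congr_deriv ?_
    norm_num
    ring
  have h2 := h1.exp
  have h3 := (h2.const_mul (m * g * (muS - muC))).const_add (m * g * muC)
  have h4 : HasDerivAt (fun x => m * g * (muC + (muS - muC) * Real.exp (-(x ^ 2) / vs ^ 2)))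
      (m * g * (muS - muC) * (-(2 * v) / vs ^ 2 * Real.exp (-(v ^ 2) / vs ^ 2))) v := by
    have heq : (fun x => m * g * (muC + (muS - muC) * Real.exp (-(x ^ 2) / vs ^ 2)))
        = fun x => m * g * muC + m * g * (muS - muC) * Real.exp (-(x ^ 2) / vs ^ 2) := by
      funext x; ring
    rw [heq]
    refine h3.congr_deriv ?_
    ring
  apply h4.congr_of_eventuallyEq
  filter_upwards [Ioi_mem_nhds hv] with x hx
  exact fnl_eq_pos m g vs muC muS hx

lemma phi_sector_a (m g vs muC muS vref : ℝ) (hm : 0 < m) (hg : 0 < g) (hvs : 0 < vs)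
    (hmu : muC < muS) (hvref : 0 < vref) {s : ℝ} (hs : 0 < s + vref) :
    s * phi m g vs muC muS vref s ≤ 0 := by
  have hE : ∀ a b : ℝ, 0 < a → a < b →
      Real.exp (-(b ^ 2) / vs ^ 2) < Real.exp (-(a ^ 2) / vs ^ 2) := by
    intro a b ha hab
    apply Real.exp_lt_exp.2
    have h2 : a ^ 2 < b ^ 2 := by nlinarith
    have hv2 : (0:ℝ) < vs ^ 2 := by positivity
    exact (div_lt_div_iff_of_pos_right hv2).2 (by linarith)
  have hpos : 0 < m * g * (muS - muC) := mul_pos (mul_pos hm hg) (sub_pos.2 hmu)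
  rcases lt_trichotomy s 0 with hneg | rfl0 | hposs
  · have h1 : phi m g vs muC muS vref s > 0 := by
      unfold phi
      rw [fnl_eq_pos m g vs muC muS hs, fnl_eq_pos m g vs muC muS hvref]
      have := hE (s + vref) vref hs (by linarith)
      nlinarith
    nlinarith
  · rw [rfl0]; simp [phi]
  · have h1 : phi m g vs muC muS vref s < 0 := by
      unfold phi
      rw [fnl_eq_pos m g vs muC muS hs, fnl_eq_pos m g vs muC muS hvref]
      have := hE vref (s + vref) hvref (by linarith)
      nlinarith
    nlinarith

lemma phi_abs_le (m g vs muC muS vref rl : ℝ) (hm : 0 < m) (hg : 0 < g) (hvs : 0 < vs)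
    (hmu : muC < muS) (hvref : 0 < vref) (hrl : 0 < rl) (hrlv : rl < vref) :
    ∀ s ∈ Set.Icc (-rl) rl,
      |phi m g vs muC muS vref s| ≤ (m * g * (muS - muC) * (2 * (vref + rl) / vs ^ 2)) * |s| := by
  intro s hs
  set L := m * g * (muS - muC) * (2 * (vref + rl) / vs ^ 2) with hL
  set S := Set.Icc (vref - rl) (vref + rl) with hS
  set c := m * g * (muS - muC) with hcdef
  have hcpos : 0 < c := mul_pos (mul_pos hm hg) (sub_pos.2 hmu)
  have hv2 : (0:ℝ) < vs ^ 2 := by positivity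
  have hder : ∀ x ∈ S, HasDerivWithinAt (Fnl m g vs muC muS)
      (c * (-(2 * x) / vs ^ 2 * Real.exp (-(x ^ 2) / vs ^ 2))) S x := by
    intro x hx
    have hxpos : 0 < x := by
      rcases hx with ⟨h1, _⟩; linarith
    exact (fnl_hasDerivAt m g vs muC muS hxpos).hasDerivWithinAt
  have hbd : ∀ x ∈ S, ‖c * (-(2 * x) / vs ^ 2 * Real.exp (-(x ^ 2) / vs ^ 2))‖ ≤ L := by
    intro x hx
    rcases hx with ⟨h1, h2⟩
    have hxpos : 0 < x := by linarith
    have hE1 : Real.exp (-(x ^ 2) / vs ^ 2) ≤ 1 := by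
      apply Real.exp_le_one_iff.2
      have : 0 < x ^ 2 := by positivity
      apply div_nonpos_of_nonpos_of_nonneg <;> nlinarith
    have hE0 : 0 < Real.exp (-(x ^ 2) / vs ^ 2) := Real.exp_pos _
    have hrepr : c * (-(2 * x) / vs ^ 2 * Real.exp (-(x ^ 2) / vs ^ 2))
        = -(c * (2 * x / vs ^ 2 * Real.exp (-(x ^ 2) / vs ^ 2))) := by ring
    rw [Real.norm_eq_abs, hrepr, abs_neg, abs_of_nonneg (by positivity), hL]
    calc c * (2 * x / vs ^ 2 * Real.exp (-(x ^ 2) / vs ^ 2))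
        ≤ c * (2 * x / vs ^ 2 * 1) := by gcongr
      _ = c * (2 * x / vs ^ 2) := by ring
      _ ≤ c * (2 * (vref + rl) / vs ^ 2) := by gcongr
  have key := Convex.norm_image_sub_le_of_norm_hasDerivWithin_le hder hbd (convex_Icc _ _)
    (x := vref) (y := s + vref) ⟨by linarith, by linarith⟩
    ⟨by rcases hs with ⟨h1,h2⟩; linarith, by rcases hs with ⟨h1,h2⟩; linarith⟩
  have := key
  unfold phi
  rw [Real.norm_eq_abs, Real.norm_eq_abs] at this
  simpa using this

lemma phi_sector_b (m g vs muC muS vref rl lam : ℝ) (hm : 0 < m) (hg : 0 < g) (hvs : 0 < vs)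
    (hmu : muC < muS) (hvref : 0 < vref) (hrl : 0 < rl) (hrlv : rl < vref)
    (hlam : lammin m g vs muC muS vref rl ≤ lam) :
    ∀ s ∈ Set.Icc (-rl) rl, 0 ≤ s * (phi m g vs muC muS vref s + lam * s) := by
  intro s hs
  rcases eq_or_ne s 0 with rfl | hs0
  · simp
  set L := m * g * (muS - muC) * (2 * (vref + rl) / vs ^ 2) with hL
  have hbdd : BddAbove {y : ℝ | ∃ s ∈ Set.Icc (-rl) rl, s ≠ 0 ∧
      y = -phi m g vs muC muS vref s / s} := by
    refine ⟨L, fun y hy => ?_⟩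
    obtain ⟨u, hu, hu0, rfl⟩ := hy
    have habs := phi_abs_le m g vs muC muS vref rl hm hg hvs hmu hvref hrl hrlv u hu
    have huabs : 0 < |u| := abs_pos.2 hu0
    have h1 : |(-phi m g vs muC muS vref u / u)| ≤ L := by
      rw [abs_div, abs_neg]
      rw [div_le_iff₀ huabs]
      calc |phi m g vs muC muS vref u| ≤ L * |u| := habs
        _ = L * |u| := rfl
    calc -phi m g vs muC muS vref u / u ≤ |(-phi m g vs muC muS vref u / u)| := le_abs_self _
      _ ≤ L := h1
  have hmem : -phi m g vs muC muS vref s / s ∈ {y : ℝ | ∃ s ∈ Set.Icc (-rl) rl, s ≠ 0 ∧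
      y = -phi m g vs muC muS vref s / s} := ⟨s, hs, hs0, rfl⟩
  have hle : -phi m g vs muC muS vref s / s ≤ lam := le_trans (le_csSup hbdd hmem) hlam
  have hs2 : 0 < s ^ 2 := by positivity
  have := mul_le_mul_of_nonneg_right hle (le_of_lt hs2)
  have heq : -phi m g vs muC muS vref s / s * s ^ 2 = -phi m g vs muC muS vref s * s := by
    field_simp
  rw [heq] at this
  nlinarith [this]

lemma phi_sector (m g vs muC muS vref rl lam : ℝ) (hm : 0 < m) (hg : 0 < g) (hvs : 0 < vs)
    (hmu : muC < muS) (hvref : 0 < vref) (hrl : 0 < rl) (hrlv : rl < vref)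
    (hlam : lammin m g vs muC muS vref rl ≤ lam) :
    ∀ s ∈ Set.Icc (-rl) rl,
      phi m g vs muC muS vref s * (phi m g vs muC muS vref s + lam * s) ≤ 0 := by
  intro s hs
  rcases eq_or_ne s 0 with rfl | hs0
  · simp [phi]
  have ha : s * phi m g vs muC muS vref s ≤ 0 := by
    apply phi_sector_a m g vs muC muS vref hm hg hvs hmu hvref
    rcases hs with ⟨h1, h2⟩; linarith
  have hb := phi_sector_b m g vs muC muS vref rl lam hm hg hvs hmu hvref hrl hrlv hlam s hs
  have hs2 : 0 < s ^ 2 := by positivity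
  set p := phi m g vs muC muS vref s
  have hkey : s ^ 2 * (p * (p + lam * s)) = (s * p) * (s * (p + lam * s)) := by ring
  nlinarith [mul_nonpos_of_nonpos_of_nonneg ha hb]

lemma quad_identity (m k kv Γ lam τ : ℝ) (hm : m ≠ 0) (Pl : Matrix (Fin 2) (Fin 2) ℝ)
    (hsym : Pl 1 0 = Pl 0 1) (e1 e2 w : ℝ) :
    (Sum.elim ![e1, e2] ![w]) ⬝ᵥ
        (PhiMat m k kv Γ lam τ Pl).mulVec (Sum.elim ![e1, e2] ![w])
    = ((-(1 / m) * (w + Γ * e1) - (kv / m) * e1 - (k / m) * e2) * (Pl 0 0 * e1 + Pl 0 1 * e2)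
        + e1 * (Pl 0 0 * (-(1 / m) * (w + Γ * e1) - (kv / m) * e1 - (k / m) * e2) + Pl 0 1 * e1)
        + e1 * (Pl 1 0 * e1 + Pl 1 1 * e2)
        + e2 * (Pl 1 0 * (-(1 / m) * (w + Γ * e1) - (kv / m) * e1 - (k / m) * e2) + Pl 1 1 * e1))
      - 2 * τ * (w + Γ * e1) * (w + (Γ + lam) * e1) := by
  simp [PhiMat, A0mat, Bmat, Cmat, dotProduct, Matrix.mulVec, Matrix.fromBlocks,
    Fintype.sum_sum_type, Fin.sum_univ_two, Fin.sum_univ_one, Matrix.mul_apply,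
    Matrix.transpose_apply, Matrix.vecHead, Matrix.vecTail]
  rw [hsym]
  field_simp
  ring

lemma dotself_expand (e1 e2 w : ℝ) :
    (Sum.elim ![e1, e2] ![w]) ⬝ᵥ (Sum.elim ![e1, e2] ![w]) = e1 ^ 2 + e2 ^ 2 + w ^ 2 := by
  simp [dotProduct, Fintype.sum_sum_type, Fin.sum_univ_two, Fin.sum_univ_one]
  ring

lemma quad_upper (p00 p01 p10 p11 a b : ℝ) :
    a * (p00 * a + p01 * b) + b * (p10 * a + p11 * b)
      ≤ (|p00| + |p01| + |p10| + |p11| + 1) * (a ^ 2 + b ^ 2) := by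
  nlinarith [le_abs_self p00, le_abs_self p01, le_abs_self p10, le_abs_self p11,
    abs_nonneg p00, abs_nonneg p01, abs_nonneg p10, abs_nonneg p11,
    neg_abs_le p01, neg_abs_le p10,
    sq_nonneg (a + b), sq_nonneg (a - b), sq_nonneg a, sq_nonneg b]

lemma stay_le_one (V VD : ℝ → ℝ)
    (hderiv : ∀ t, 0 ≤ t → HasDerivAt V (VD t) t)
    (hdec : ∀ t, 0 ≤ t → V t = 1 → VD t < 0)
    (hV0 : V 0 ≤ 1) : ∀ t, 0 ≤ t → V t ≤ 1 := by
  by_contra hcon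
  push_neg at hcon
  obtain ⟨t, ht0, ht⟩ := hcon
  set K := {u : ℝ | u ∈ Set.Icc 0 t ∧ V u ≤ 1} with hK
  have hK0 : (0:ℝ) ∈ K := ⟨⟨le_refl 0, ht0⟩, hV0⟩
  have hKne : K.Nonempty := ⟨0, hK0⟩
  have hKbdd : BddAbove K := ⟨t, fun u hu => hu.1.2⟩
  set s := sSup K with hs
  have hs0 : 0 ≤ s := le_csSup hKbdd hK0
  have hst : s ≤ t := csSup_le hKne fun u hu => hu.1.2
  have hVcont : ContinuousAt V s := (hderiv s hs0).continuousAt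
  have hVs : V s ≤ 1 := by
    by_contra hVs
    push_neg at hVs
    have : ∀ᶠ u in nhds s, 1 < V u :=
      hVcont.eventually (eventually_gt_nhds hVs)
    obtain ⟨δ, hδ, hball⟩ := Metric.eventually_nhds_iff.1 this
    obtain ⟨u, huK, hus⟩ := exists_lt_of_lt_csSup hKne (show s - δ < s by linarith)
    have hu_le : u ≤ s := le_csSup hKbdd huK
    have : dist u s < δ := by
      rw [Real.dist_eq, abs_of_nonpos (by linarith)]
      linarith
    exact absurd huK.2 (by push_neg; exact hball this)
  have hslt : s < t := by
    rcases lt_or_eq_of_le hst with h | h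
    · exact h
    · exfalso; rw [h] at hVs; linarith
  have hout : ∀ u ∈ Set.Ioc s t, 1 < V u := by
    intro u hu
    by_contra hVu
    push_neg at hVu
    have : u ∈ K := ⟨⟨le_trans hs0 hu.1.le, hu.2⟩, hVu⟩
    exact absurd (le_csSup hKbdd this) (not_le.2 hu.1)
  have hIoc : Set.Ioc s t ∈ nhdsWithin s (Set.Ioi s) :=
    Ioc_mem_nhdsGT_of_mem ⟨le_refl s, hslt⟩
  rcases lt_or_eq_of_le hVs with hVs1 | hVs1
  · have hev : ∀ᶠ u in nhdsWithin s (Set.Ioi s), V u < 1 :=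
      (hVcont.eventually (eventually_lt_nhds hVs1)).filter_mono nhdsWithin_le_nhds
    obtain ⟨u, hu1, hu2⟩ := (hev.and (Filter.eventually_of_mem hIoc fun u hu => hu)).exists
    exact absurd (hout u hu2) (by linarith)
  · have hVD : VD s < 0 := hdec s hs0 hVs1
    have hslope := hasDerivAt_iff_tendsto_slope.1 (hderiv s hs0)
    have hev : ∀ᶠ u in nhdsWithin s {s}ᶜ, slope V s u < 0 :=
      hslope.eventually (eventually_lt_nhds hVD)
    have hev2 : ∀ᶠ u in nhdsWithin s (Set.Ioi s), slope V s u < 0 :=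
      hev.filter_mono (nhdsWithin_mono s fun u hu => ne_of_gt hu)
    obtain ⟨u, hu1, hu2⟩ := (hev2.and (Filter.eventually_of_mem hIoc fun u hu => hu)).exists
    have hus : s < u := hu2.1
    have : V u - V s < 0 := by
      rw [slope_def_field] at hu1
      have hpos : 0 < u - s := sub_pos.2 hus
      have h3 : V u - V s = (V u - V s) / (u - s) * (u - s) := by field_simp
      nlinarith [mul_neg_of_neg_of_pos hu1 hpos]
    have h4 := hout u hu2
    linarith [hVs1]

lemma decay_lemma (V VD : ℝ → ℝ) (c : ℝ) (hc : 0 < c)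
    (hderiv : ∀ t, 0 ≤ t → HasDerivAt V (VD t) t)
    (hVd : ∀ t, 0 ≤ t → VD t ≤ -c * V t) :
    ∀ t, 0 ≤ t → V t ≤ V 0 * Real.exp (-(c * t)) := by
  set G : ℝ → ℝ := fun t => V t * Real.exp (c * t) with hG
  have hGderiv : ∀ t, 0 ≤ t →
      HasDerivAt G ((VD t + c * V t) * Real.exp (c * t)) t := by
    intro t ht
    have he : HasDerivAt (fun u : ℝ => Real.exp (c * u)) (Real.exp (c * t) * c) t := by
      have h1 : HasDerivAt (fun u : ℝ => c * u) c t := by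
        simpa using (hasDerivAt_id t).const_mul c
      exact h1.exp
    have := (hderiv t ht).mul he
    refine this.congr_deriv ?_
    ring
  have hanti : AntitoneOn G (Set.Ici 0) := by
    apply antitoneOn_of_deriv_nonpos (convex_Ici 0)
    · intro u hu
      exact (hGderiv u hu).continuousAt.continuousWithinAt
    · intro u hu
      rw [interior_Ici] at hu
      exact (hGderiv u (le_of_lt hu)).differentiableAt.differentiableWithinAt
    · intro u hu
      rw [interior_Ici] at hu
      rw [(hGderiv u (le_of_lt hu)).deriv]
      have h1 := hVd u (le_of_lt hu)
      have h2 : VD u + c * V u ≤ 0 := by linarith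
      exact mul_nonpos_of_nonpos_of_nonneg h2 (Real.exp_pos _).le
  intro t ht
  have h1 : G t ≤ G 0 := hanti (Set.self_mem_Ici) ht ht
  have h2 : G 0 = V 0 := by simp [hG]
  have h3 : G t * Real.exp (-(c * t)) = V t := by
    show V t * Real.exp (c * t) * Real.exp (-(c * t)) = V t
    rw [mul_assoc, ← Real.exp_add]
    simp
  rw [← h3]
  calc G t * Real.exp (-(c * t)) ≤ G 0 * Real.exp (-(c * t)) :=
        mul_le_mul_of_nonneg_right h1 (Real.exp_pos _).le
    _ = V 0 * Real.exp (-(c * t)) := by rw [h2]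

lemma block_bound (Pl : Matrix (Fin 2) (Fin 2) ℝ) (rl : ℝ) (hrl : 0 < rl)
    (hblock : (Matrix.fromBlocks Pl Cmatᵀ Cmat !![rl ^ 2]).PosSemidef)
    (a b : ℝ) : a ^ 2 ≤ rl ^ 2 * (![a, b] ⬝ᵥ Pl.mulVec ![a, b]) := by
  have h := hblock.dotProduct_mulVec_nonneg (Sum.elim ![a, b] ![-a / rl ^ 2])
  simp [Cmat, dotProduct, Matrix.mulVec, Matrix.fromBlocks,
    Fintype.sum_sum_type, Fin.sum_univ_two, Fin.sum_univ_one, Matrix.transpose_apply,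
    Matrix.vecHead, Matrix.vecTail] at h
  simp [dotProduct, Matrix.mulVec, Fin.sum_univ_two]
  have hrl2 : (0:ℝ) < rl ^ 2 := by positivity
  have e : a * (Pl 0 0 * a + Pl 0 1 * b + -a / rl ^ 2) + b * (Pl 1 0 * a + Pl 1 1 * b) +
      -a / rl ^ 2 * (a + rl ^ 2 * (-a / rl ^ 2))
      = a * (Pl 0 0 * a + Pl 0 1 * b) + b * (Pl 1 0 * a + Pl 1 1 * b) - a ^ 2 / rl ^ 2 := by
    field_simp
    ring
  have hfin : 0 ≤ a * (Pl 0 0 * a + Pl 0 1 * b) + b * (Pl 1 0 * a + Pl 1 1 * b)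
      - a ^ 2 / rl ^ 2 := by linarith [h, e]
  have h2 := mul_le_mul_of_nonneg_left hfin hrl2.le
  have h3 : rl ^ 2 * (a ^ 2 / rl ^ 2) = a ^ 2 := by field_simp
  nlinarith [h2]


set_option maxHeartbeats 1000000 in
theorem stmt17 (m g vs k kv muC muS vref : ℝ)
    (hm : 0 < m) (hg : 0 < g) (hvs : 0 < vs) (hk : 0 < k) (hkv : 0 < kv)
    (hmuC : 0 < muC) (hmu : muC < muS) (hvref : 0 < vref)
    (hHurwitz : 0 < kv + Gam m g vs muC muS vref)
    (rl : ℝ) (hrl : 0 < rl) (hrlv : rl < vref)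
    (lam : ℝ) (hlam : lammin m g vs muC muS vref rl ≤ lam)
    (Pl : Matrix (Fin 2) (Fin 2) ℝ) (hPl : Pl.PosDef)
    (τ : ℝ) (hτ : 0 < τ)
    (hPhi : NegDef (PhiMat m k kv (Gam m g vs muC muS vref) lam τ Pl))
    (hblock : (Matrix.fromBlocks Pl Cmatᵀ Cmat !![rl ^ 2]).PosSemidef)
    -- a solution (ε₁, ε₂, f) of the error system:
    (ε1 ε2 f : ℝ → ℝ)
    (hsol : ∀ t : ℝ, 0 ≤ t →
      f t ∈ Ffric m g vs muC muS (ε1 t + vref) ∧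
      HasDerivAt ε1
        (-(1 / m) * (f t - Fnl m g vs muC muS vref) - (kv / m) * ε1 t - (k / m) * ε2 t) t ∧
      HasDerivAt ε2 (ε1 t) t)
    -- whose initial condition lies in the estimated basin of attraction:
    (hinit : ![ε1 0, ε2 0] ⬝ᵥ Pl.mulVec ![ε1 0, ε2 0] ≤ 1) :
    (∀ t : ℝ, 0 ≤ t → ![ε1 t, ε2 t] ⬝ᵥ Pl.mulVec ![ε1 t, ε2 t] ≤ 1) ∧
    Filter.Tendsto (fun t => (ε1 t, ε2 t)) Filter.atTop (nhds (0, 0)) := by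
  
  -- abbreviations
  set Γ : ℝ := Gam m g vs muC muS vref with hΓdef
  -- bound from the LMI
  obtain ⟨δ, hδ, hΦbound⟩ := negdef_bound _ hPhi
  -- lower bound from positive definiteness of Pl
  have hPlneg : NegDef (-Pl) := by
    intro x hx
    have h := hPl.dotProduct_mulVec_pos hx
    have h' : 0 < x ⬝ᵥ Pl.mulVec x := by simpa [dotProduct] using h
    rw [Matrix.neg_mulVec, dotProduct_neg]
    linarith
  obtain ⟨α, hα, hPlbound⟩ := negdef_bound (-Pl) hPlneg
  have hPllow : ∀ x : Fin 2 → ℝ, α * (x ⬝ᵥ x) ≤ x ⬝ᵥ Pl.mulVec x := by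
    intro x
    have := hPlbound x
    rw [Matrix.neg_mulVec, dotProduct_neg] at this
    linarith
  -- symmetry of Pl
  have hsym : Pl 1 0 = Pl 0 1 := by
    have := congrFun (congrFun hPl.1 0) 1
    simpa using this
  -- upper bound constant
  set β : ℝ := |Pl 0 0| + |Pl 0 1| + |Pl 1 0| + |Pl 1 1| + 1 with hβdef
  have hβ : 0 < β := by positivity
  set c : ℝ := δ / β with hcdef
  have hcpos : 0 < c := div_pos hδ hβ
  -- scalar Lyapunov function
  set V : ℝ → ℝ := fun t => ε1 t * (Pl 0 0 * ε1 t + Pl 0 1 * ε2 t)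
      + ε2 t * (Pl 1 0 * ε1 t + Pl 1 1 * ε2 t) with hVdef
  have hVdot : ∀ a b : ℝ, ![a, b] ⬝ᵥ Pl.mulVec ![a, b]
      = a * (Pl 0 0 * a + Pl 0 1 * b) + b * (Pl 1 0 * a + Pl 1 1 * b) := by
    intro a b
    simp [dotProduct, Matrix.mulVec, Fin.sum_univ_two]
  set D1 : ℝ → ℝ := fun t =>
      -(1 / m) * (f t - Fnl m g vs muC muS vref) - (kv / m) * ε1 t - (k / m) * ε2 t with hD1def
  set VD : ℝ → ℝ := fun t =>
      D1 t * (Pl 0 0 * ε1 t + Pl 0 1 * ε2 t)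
        + ε1 t * (Pl 0 0 * D1 t + Pl 0 1 * ε1 t)
        + ε1 t * (Pl 1 0 * ε1 t + Pl 1 1 * ε2 t)
        + ε2 t * (Pl 1 0 * D1 t + Pl 1 1 * ε1 t) with hVDdef
  -- V is differentiable with derivative VD on [0, ∞)
  have hVderiv : ∀ t : ℝ, 0 ≤ t → HasDerivAt V (VD t) t := by
    intro t ht
    obtain ⟨hf, h1, h2⟩ := hsol t ht
    have h1' : HasDerivAt ε1 (D1 t) t := h1
    have hp1 : HasDerivAt (fun u => ε1 u * (Pl 0 0 * ε1 u + Pl 0 1 * ε2 u))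
        (D1 t * (Pl 0 0 * ε1 t + Pl 0 1 * ε2 t)
          + ε1 t * (Pl 0 0 * D1 t + Pl 0 1 * ε1 t)) t :=
      h1'.mul ((h1'.const_mul _).add (h2.const_mul _))
    have hp2 : HasDerivAt (fun u => ε2 u * (Pl 1 0 * ε1 u + Pl 1 1 * ε2 u))
        (ε1 t * (Pl 1 0 * ε1 t + Pl 1 1 * ε2 t)
          + ε2 t * (Pl 1 0 * D1 t + Pl 1 1 * ε1 t)) t :=
      h2.mul ((h1'.const_mul _).add (h2.const_mul _))
    have := hp1.add hp2
    rw [hVDdef]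
    refine this.congr_deriv ?_
    ring
  -- the key differential inequality on the sublevel set
  have hVbound : ∀ t : ℝ, 0 ≤ t → V t ≤ 1 → VD t ≤ -c * V t := by
    intro t ht hV1
    obtain ⟨hf, h1, h2⟩ := hsol t ht
    set s : ℝ := ε1 t with hsdef
    set e2 : ℝ := ε2 t with he2def
    -- V t ≥ 0
    have hVnn : 0 ≤ V t := by
      have := hPllow ![s, e2]
      rw [hVdot] at this
      have hdd : (0:ℝ) ≤ ![s, e2] ⬝ᵥ ![s, e2] := by
        simp [dotProduct, Fin.sum_univ_two]
        nlinarith only [sq_nonneg s, sq_nonneg e2]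
      have := le_trans (mul_nonneg hα.le hdd) this
      simpa [hVdef, hsdef, he2def] using this
    -- |ε1 t| ≤ rl
    have hrl2 : (0:ℝ) < rl ^ 2 := by positivity
    have hs2rl : s ^ 2 ≤ rl ^ 2 * V t := by
      have hb := block_bound Pl rl hrl hblock s e2
      rw [hVdot] at hb
      simpa [hVdef, hsdef, he2def] using hb
    have hs2 : s ^ 2 ≤ rl ^ 2 := by nlinarith only [hs2rl, hV1, hrl2]
    have habs : |s| ≤ rl := by
      have h1 := Real.sqrt_le_sqrt hs2
      rwa [Real.sqrt_sq_eq_abs, Real.sqrt_sq hrl.le] at h1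
    have hs_lb : -rl ≤ s := (abs_le.1 habs).1
    have hs_ub : s ≤ rl := (abs_le.1 habs).2
    have hsIcc : s ∈ Set.Icc (-rl) rl := ⟨hs_lb, hs_ub⟩
    have hspos : 0 < s + vref := by linarith only [hs_lb, hrlv, hvref]
    -- value of f
    have hfval : f t = Fnl m g vs muC muS (s + vref) := by
      have hmem := hf
      rw [Ffric, if_neg (ne_of_gt hspos)] at hmem
      simpa [hsdef] using hmem
    have hphieq : f t - Fnl m g vs muC muS vref = phi m g vs muC muS vref s := by
      rw [hfval, phi]
    -- residual nonlinearity
    set w : ℝ := phi m g vs muC muS vref s - Γ * s with hwdef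
    set z : Fin 2 ⊕ Fin 1 → ℝ := Sum.elim ![s, e2] ![w] with hzdef
    have hid := quad_identity m k kv Γ lam τ (ne_of_gt hm) Pl hsym s e2 w
    have hD1eq : D1 t = -(1 / m) * (w + Γ * s) - (kv / m) * s - (k / m) * e2 := by
      rw [hD1def]
      simp only []
      rw [hphieq]
      simp only [hwdef, hsdef, he2def]
      ring_nf
    have hVDeq : VD t = z ⬝ᵥ (PhiMat m k kv Γ lam τ Pl).mulVec z
        + 2 * τ * (phi m g vs muC muS vref s) * (phi m g vs muC muS vref s + lam * s) := by
      rw [hid]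
      have hw1 : w + Γ * s = phi m g vs muC muS vref s := by rw [hwdef]; ring
      have hw2 : w + (Γ + lam) * s = phi m g vs muC muS vref s + lam * s := by
        rw [hwdef]; ring
      rw [hw1, hw2, hVDdef]
      simp only []
      rw [hD1eq, hw1]
      ring
    -- bound the quadratic form
    have hquad := hΦbound z
    have hzz : z ⬝ᵥ z = s ^ 2 + e2 ^ 2 + w ^ 2 := by
      rw [hzdef]; exact dotself_expand s e2 w
    have hsec : phi m g vs muC muS vref s * (phi m g vs muC muS vref s + lam * s) ≤ 0 :=
      phi_sector m g vs muC muS vref rl lam hm hg hvs hmu hvref hrl hrlv hlam s hsIcc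
    have hVDle : VD t ≤ -δ * (s ^ 2 + e2 ^ 2) := by
      rw [hVDeq]
      have h1 : z ⬝ᵥ (PhiMat m k kv Γ lam τ Pl).mulVec z ≤ -δ * (s ^ 2 + e2 ^ 2 + w ^ 2) := by
        rw [← hzz]; exact hquad
      nlinarith only [h1, sq_nonneg w, hτ, hsec, hδ]
    -- V t ≤ β (s² + e2²)
    have hVup : V t ≤ β * (s ^ 2 + e2 ^ 2) := by
      have := quad_upper (Pl 0 0) (Pl 0 1) (Pl 1 0) (Pl 1 1) s e2
      simpa [hVdef, hsdef, he2def, hβdef] using this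
    -- conclude
    have hfinal : -δ * (s ^ 2 + e2 ^ 2) ≤ -c * V t := by
      rw [hcdef]
      have h1 : δ / β * V t ≤ δ / β * (β * (s ^ 2 + e2 ^ 2)) :=
        mul_le_mul_of_nonneg_left hVup (div_nonneg hδ.le hβ.le)
      have h2 : δ / β * (β * (s ^ 2 + e2 ^ 2)) = δ * (s ^ 2 + e2 ^ 2) := by
        field_simp
      linarith only [h1, h2 ▸ h1]
    linarith only [hVDle, hfinal]
  -- V t ≥ 0 for all t (used later)
  have hVnonneg : ∀ t : ℝ, 0 ≤ V t := by
    intro t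
    have := hPllow ![ε1 t, ε2 t]
    rw [hVdot] at this
    have hdd : (0:ℝ) ≤ ![ε1 t, ε2 t] ⬝ᵥ ![ε1 t, ε2 t] := by
      simp [dotProduct, Fin.sum_univ_two]
      nlinarith only [sq_nonneg (ε1 t), sq_nonneg (ε2 t)]
    have := le_trans (mul_nonneg hα.le hdd) this
    simpa [hVdef] using this
  -- invariance
  have hV0 : V 0 ≤ 1 := by
    have := hinit
    rw [hVdot] at this
    simpa [hVdef] using this
  have hstay : ∀ t : ℝ, 0 ≤ t → V t ≤ 1 := by
    apply stay_le_one V VD hVderiv ?_ hV0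
    intro t ht hV1
    have := hVbound t ht (le_of_eq hV1)
    rw [hV1] at this
    linarith only [this, mul_pos hcpos one_pos]
  constructor
  · intro t ht
    rw [hVdot]
    exact hstay t ht
  -- convergence
  have hdecay : ∀ t : ℝ, 0 ≤ t → V t ≤ Real.exp (-(c * t)) := by
    have hd := decay_lemma V VD c hcpos hVderiv (fun t ht => hVbound t ht (hstay t ht))
    intro t ht
    calc V t ≤ V 0 * Real.exp (-(c * t)) := hd t ht
      _ ≤ 1 * Real.exp (-(c * t)) :=
          mul_le_mul_of_nonneg_right hV0 (Real.exp_pos _).le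
      _ = Real.exp (-(c * t)) := one_mul _
  have hcomp : ∀ t : ℝ, 0 ≤ t → α * (ε1 t ^ 2 + ε2 t ^ 2) ≤ Real.exp (-(c * t)) := by
    intro t ht
    have h1 := hPllow ![ε1 t, ε2 t]
    rw [hVdot] at h1
    have h2 : ![ε1 t, ε2 t] ⬝ᵥ ![ε1 t, ε2 t] = ε1 t ^ 2 + ε2 t ^ 2 := by
      simp [dotProduct, Fin.sum_univ_two]; ring
    rw [h2] at h1
    have h3 : α * (ε1 t ^ 2 + ε2 t ^ 2) ≤ V t := by
      rw [hVdef]; simp only []; linarith only [h1]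
    linarith only [h3, hdecay t ht]
  -- the bound function tends to zero
  have hbtend : Filter.Tendsto (fun t : ℝ => Real.sqrt (Real.exp (-(c * t)) / α))
      Filter.atTop (nhds 0) := by
    have h1 : Filter.Tendsto (fun t : ℝ => c * t) Filter.atTop Filter.atTop :=
      Filter.Tendsto.const_mul_atTop hcpos Filter.tendsto_id
    have h2 : Filter.Tendsto (fun t : ℝ => -(c * t)) Filter.atTop Filter.atBot :=
      Filter.tendsto_neg_atTop_atBot.comp h1
    have h3 : Filter.Tendsto (fun t : ℝ => Real.exp (-(c * t))) Filter.atTop (nhds 0) :=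
      Real.tendsto_exp_atBot.comp h2
    have h4 : Filter.Tendsto (fun t : ℝ => Real.exp (-(c * t)) / α) Filter.atTop (nhds 0) := by
      have := h3.div_const α
      simpa using this
    have h5 := (Real.continuous_sqrt.tendsto 0).comp h4
    simpa [Function.comp_def] using h5
  have hsq : ∀ t : ℝ, 0 ≤ t → ∀ a : ℝ, a ^ 2 ≤ ε1 t ^ 2 + ε2 t ^ 2 →
      |a| ≤ Real.sqrt (Real.exp (-(c * t)) / α) := by
    intro t ht a ha
    have h1 := hcomp t ht
    have h2 : a ^ 2 ≤ Real.exp (-(c * t)) / α := by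
      rw [le_div_iff₀ hα]
      nlinarith only [h1, ha, hα]
    calc |a| = Real.sqrt (a ^ 2) := (Real.sqrt_sq_eq_abs a).symm
      _ ≤ Real.sqrt (Real.exp (-(c * t)) / α) := Real.sqrt_le_sqrt h2
  have hε1tend : Filter.Tendsto ε1 Filter.atTop (nhds 0) := by
    apply squeeze_zero_norm' ?_ hbtend
    filter_upwards [Filter.eventually_ge_atTop (0:ℝ)] with t ht
    exact hsq t ht (ε1 t) (by linarith only [sq_nonneg (ε2 t)])
  have hε2tend : Filter.Tendsto ε2 Filter.atTop (nhds 0) := by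
    apply squeeze_zero_norm' ?_ hbtend
    filter_upwards [Filter.eventually_ge_atTop (0:ℝ)] with t ht
    exact hsq t ht (ε2 t) (by linarith only [sq_nonneg (ε1 t)])
  exact hε1tend.prodMk_nhds hε2tend
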